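/- Let h : ℝ² → ℝ be C⁴, let A : ℝ² → ℝ² be an invertible linear map, and let x ∈ ℝ² be such that K₂(h) is nonzero in a neighborhood of A x. Define J₄(g)(y) as the directional derivative of the function J₃(g) = K₃(g)²/K₂(g)³ at the point y along the vector λ̂(g)(y) = (3·K₃(g)(y)/(2·K₂(g)(y)²)) · w_g(y). Then J₄(h ∘ A)(x) = J₄(h)(A x). -/

import Mathlib

/-- First partial derivative of `h : ℝ² → ℝ` in the `i`-th coordinate direction. -/
noncomputable def pd1 (h : (Fin 2 → ℝ) → ℝ) (i : Fin 2) (x : Fin 2 → ℝ) : ℝ :=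
  fderiv ℝ h x (Pi.single i 1)

/-- Second partial derivative of `h : ℝ² → ℝ`. -/
noncomputable def pd2 (h : (Fin 2 → ℝ) → ℝ) (i j : Fin 2) (x : Fin 2 → ℝ) : ℝ :=
  iteratedFDeriv ℝ 2 h x ![Pi.single i 1, Pi.single j 1]

/-- Third partial derivative of `h : ℝ² → ℝ`. -/
noncomputable def pd3 (h : (Fin 2 → ℝ) → ℝ) (i j m : Fin 2) (x : Fin 2 → ℝ) : ℝ :=
  iteratedFDeriv ℝ 3 h x ![Pi.single i 1, Pi.single j 1, Pi.single m 1]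

/-- The rotated gradient `w_h(x) = (h₂(x), −h₁(x))`. -/
noncomputable def wrot (h : (Fin 2 → ℝ) → ℝ) (x : Fin 2 → ℝ) : Fin 2 → ℝ :=
  ![pd1 h 1 x, -pd1 h 0 x]

/-- `K₂(h) = (1/2)(h₁₁h₂² − 2h₁₂h₁h₂ + h₂₂h₁²)`. -/
noncomputable def K2 (h : (Fin 2 → ℝ) → ℝ) (x : Fin 2 → ℝ) : ℝ :=
  (1 / 2) * (pd2 h 0 0 x * (pd1 h 1 x) ^ 2 - 2 * pd2 h 0 1 x * pd1 h 0 x * pd1 h 1 x +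
    pd2 h 1 1 x * (pd1 h 0 x) ^ 2)

/-- `K₃(h) = (1/6)(h₁₁₁h₂³ − 3h₁₁₂h₂²h₁ + 3h₁₂₂h₂h₁² − h₂₂₂h₁³)`. -/
noncomputable def K3 (h : (Fin 2 → ℝ) → ℝ) (x : Fin 2 → ℝ) : ℝ :=
  (1 / 6) * (pd3 h 0 0 0 x * (pd1 h 1 x) ^ 3 -
    3 * pd3 h 0 0 1 x * (pd1 h 1 x) ^ 2 * pd1 h 0 x +
    3 * pd3 h 0 1 1 x * pd1 h 1 x * (pd1 h 0 x) ^ 2 -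
    pd3 h 1 1 1 x * (pd1 h 0 x) ^ 3)

/-- The differential invariant `J₃(g) = K₃(g)²/K₂(g)³` of binary forms. -/
noncomputable def J3 (g : (Fin 2 → ℝ) → ℝ) (y : Fin 2 → ℝ) : ℝ :=
  (K3 g y) ^ 2 / (K2 g y) ^ 3

/-- The invariant vector field `λ̂(g)(y) = (3K₃(g)(y)/(2K₂(g)(y)²))·w_g(y)`. -/
noncomputable def lamhat (g : (Fin 2 → ℝ) → ℝ) (y : Fin 2 → ℝ) : Fin 2 → ℝ :=
  (3 * K3 g y / (2 * (K2 g y) ^ 2)) • wrot g y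

/-- `J₄(g)(y)` is the directional derivative of `J₃(g)` at `y` along `λ̂(g)(y)`. -/
noncomputable def J4 (g : (Fin 2 → ℝ) → ℝ) (y : Fin 2 → ℝ) : ℝ :=
  fderiv ℝ (J3 g) y (lamhat g y)

namespace J4Aux


open Matrix

local notation "E" => (Fin 2 → ℝ)

noncomputable def ee (i : Fin 2) : E := Pi.single i 1

lemma upd20 (a b u : E) : Function.update ![a, b] 0 u = ![u, b] := by
  funext i; fin_cases i <;> simp

lemma upd21 (a b u : E) : Function.update ![a, b] 1 u = ![a, u] := by
  funext i; fin_cases i <;> simp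

lemma upd30 (a b c u : E) : Function.update ![a, b, c] 0 u = ![u, b, c] := by
  funext i; fin_cases i <;> simp

lemma upd31 (a b c u : E) : Function.update ![a, b, c] 1 u = ![a, u, c] := by
  funext i; fin_cases i <;> simp

lemma upd32 (a b c u : E) : Function.update ![a, b, c] 2 u = ![a, b, u] := by
  funext i; fin_cases i <;> simp

lemma vdec (v : E) : v = v 0 • ee 0 + v 1 • ee 1 := by
  funext i; fin_cases i <;> simp [ee]

/-- expansion in the first slot of a bilinear map -/
lemma bslot0 (B : ContinuousMultilinearMap ℝ (fun _ : Fin 2 => E) ℝ) (u a : E) :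
    B ![u, a] = u 0 * B ![ee 0, a] + u 1 * B ![ee 1, a] := by
  conv_lhs => rw [show (![u, a] : Fin 2 → E) = Function.update ![u, a] 0 (u 0 • ee 0 + u 1 • ee 1) by
    rw [upd20, ← vdec]]
  rw [B.map_update_add, B.map_update_smul, B.map_update_smul, upd20, upd20]
  simp [smul_eq_mul]

lemma bslot1 (B : ContinuousMultilinearMap ℝ (fun _ : Fin 2 => E) ℝ) (a u : E) :
    B ![a, u] = u 0 * B ![a, ee 0] + u 1 * B ![a, ee 1] := by
  conv_lhs => rw [show (![a, u] : Fin 2 → E) = Function.update ![a, u] 1 (u 0 • ee 0 + u 1 • ee 1) by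
    rw [upd21, ← vdec]]
  rw [B.map_update_add, B.map_update_smul, B.map_update_smul, upd21, upd21]
  simp [smul_eq_mul]

lemma bexp (B : ContinuousMultilinearMap ℝ (fun _ : Fin 2 => E) ℝ) (u v : E) :
    B ![u, v] = u 0 * v 0 * B ![ee 0, ee 0] + u 0 * v 1 * B ![ee 0, ee 1]
      + u 1 * v 0 * B ![ee 1, ee 0] + u 1 * v 1 * B ![ee 1, ee 1] := by
  rw [bslot0, bslot1 B (ee 0) v, bslot1 B (ee 1) v]; ring

lemma tslot0 (B : ContinuousMultilinearMap ℝ (fun _ : Fin 3 => E) ℝ) (u a b : E) :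
    B ![u, a, b] = u 0 * B ![ee 0, a, b] + u 1 * B ![ee 1, a, b] := by
  conv_lhs => rw [show (![u, a, b] : Fin 3 → E)
      = Function.update ![u, a, b] 0 (u 0 • ee 0 + u 1 • ee 1) by rw [upd30, ← vdec]]
  rw [B.map_update_add, B.map_update_smul, B.map_update_smul, upd30, upd30]
  simp [smul_eq_mul]

lemma tslot1 (B : ContinuousMultilinearMap ℝ (fun _ : Fin 3 => E) ℝ) (a u b : E) :
    B ![a, u, b] = u 0 * B ![a, ee 0, b] + u 1 * B ![a, ee 1, b] := by
  conv_lhs => rw [show (![a, u, b] : Fin 3 → E)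
      = Function.update ![a, u, b] 1 (u 0 • ee 0 + u 1 • ee 1) by rw [upd31, ← vdec]]
  rw [B.map_update_add, B.map_update_smul, B.map_update_smul, upd31, upd31]
  simp [smul_eq_mul]

lemma tslot2 (B : ContinuousMultilinearMap ℝ (fun _ : Fin 3 => E) ℝ) (a b u : E) :
    B ![a, b, u] = u 0 * B ![a, b, ee 0] + u 1 * B ![a, b, ee 1] := by
  conv_lhs => rw [show (![a, b, u] : Fin 3 → E)
      = Function.update ![a, b, u] 2 (u 0 • ee 0 + u 1 • ee 1) by rw [upd32, ← vdec]]
  rw [B.map_update_add, B.map_update_smul, B.map_update_smul, upd32, upd32]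
  simp [smul_eq_mul]

lemma texp (B : ContinuousMultilinearMap ℝ (fun _ : Fin 3 => E) ℝ) (u v w : E) :
    B ![u, v, w] =
      u 0 * v 0 * w 0 * B ![ee 0, ee 0, ee 0] + u 0 * v 0 * w 1 * B ![ee 0, ee 0, ee 1]
      + u 0 * v 1 * w 0 * B ![ee 0, ee 1, ee 0] + u 0 * v 1 * w 1 * B ![ee 0, ee 1, ee 1]
      + u 1 * v 0 * w 0 * B ![ee 1, ee 0, ee 0] + u 1 * v 0 * w 1 * B ![ee 1, ee 0, ee 1]
      + u 1 * v 1 * w 0 * B ![ee 1, ee 1, ee 0] + u 1 * v 1 * w 1 * B ![ee 1, ee 1, ee 1] := by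
  rw [tslot0, tslot1 B (ee 0) v w, tslot1 B (ee 1) v w,
    tslot2 B (ee 0) (ee 0) w, tslot2 B (ee 0) (ee 1) w,
    tslot2 B (ee 1) (ee 0) w, tslot2 B (ee 1) (ee 1) w]; ring


/-! ### smul extraction -/

lemma bsmul (B : ContinuousMultilinearMap ℝ (fun _ : Fin 2 => E) ℝ) (c : ℝ) (u v : E) :
    B ![c • u, c • v] = c ^ 2 * B ![u, v] := by
  have h1 : (![c • u, c • v] : Fin 2 → E) = Function.update ![u, c • v] 0 (c • u) := by
    rw [upd20]
  rw [h1, B.map_update_smul, upd20,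
    show (![u, c • v] : Fin 2 → E) = Function.update ![u, v] 1 (c • v) by rw [upd21],
    B.map_update_smul, upd21]
  simp [smul_eq_mul]; ring

lemma tsmul (B : ContinuousMultilinearMap ℝ (fun _ : Fin 3 => E) ℝ) (c : ℝ) (u v w : E) :
    B ![c • u, c • v, c • w] = c ^ 3 * B ![u, v, w] := by
  rw [show (![c • u, c • v, c • w] : Fin 3 → E) = Function.update ![u, c • v, c • w] 0 (c • u) by
      rw [upd30],
    B.map_update_smul, upd30,
    show (![u, c • v, c • w] : Fin 3 → E) = Function.update ![u, v, c • w] 1 (c • v) by rw [upd31],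
    B.map_update_smul, upd31,
    show (![u, v, c • w] : Fin 3 → E) = Function.update ![u, v, w] 2 (c • w) by rw [upd32],
    B.map_update_smul, upd32]
  simp [smul_eq_mul]; ring

/-! ### symmetry of second and third derivatives -/

lemma d2_symm {h : E → ℝ} (hh : ContDiff ℝ 4 h) (x u v : E) :
    iteratedFDeriv ℝ 2 h x ![u, v] = iteratedFDeriv ℝ 2 h x ![v, u] := by
  rw [iteratedFDeriv_two_apply, iteratedFDeriv_two_apply]
  simp only [Matrix.cons_val_zero, Matrix.cons_val_one, Matrix.head_cons]
  exact hh.contDiffAt.isSymmSndFDerivAt (by norm_num) u v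

lemma d3_symm23 {h : E → ℝ} (hh : ContDiff ℝ 4 h) (x u v w : E) :
    iteratedFDeriv ℝ 3 h x ![u, v, w] = iteratedFDeriv ℝ 3 h x ![u, w, v] := by
  have hd : DifferentiableAt ℝ (iteratedFDeriv ℝ 2 h) x :=
    ((hh.iteratedFDeriv_right (m := 2) (by norm_num)).differentiable (by norm_num)).differentiableAt
  have key : ∀ p q : E, iteratedFDeriv ℝ 3 h x ![u, p, q]
      = fderiv ℝ (fun y => iteratedFDeriv ℝ 2 h y ![p, q]) x u := by
    intro p q
    rw [iteratedFDeriv_succ_apply_left]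
    have ht : Fin.tail (![u, p, q] : Fin 3 → E) = ![p, q] := by
      funext i; fin_cases i <;> rfl
    rw [ht]
    have hc := ((ContinuousMultilinearMap.apply ℝ (fun _ : Fin 2 => E) ℝ
        ![p, q]).hasFDerivAt.comp x hd.hasFDerivAt).fderiv
    calc fderiv ℝ (iteratedFDeriv ℝ 2 h) x ((![u, p, q] : Fin 3 → E) 0) ![p, q]
        = (ContinuousMultilinearMap.apply ℝ (fun _ : Fin 2 => E) ℝ ![p, q]).comp
            (fderiv ℝ (iteratedFDeriv ℝ 2 h) x) u := rfl
      _ = fderiv ℝ ((ContinuousMultilinearMap.apply ℝ (fun _ : Fin 2 => E) ℝ ![p, q])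
            ∘ (iteratedFDeriv ℝ 2 h)) x u := by rw [hc]
      _ = fderiv ℝ (fun y => iteratedFDeriv ℝ 2 h y ![p, q]) x u := rfl
  rw [key v w, key w v]
  have he : (fun y => iteratedFDeriv ℝ 2 h y ![v, w])
      = (fun y => iteratedFDeriv ℝ 2 h y ![w, v]) := funext fun y => d2_symm hh y v w
  rw [he]

lemma d3_symm12 {h : E → ℝ} (hh : ContDiff ℝ 4 h) (x u v w : E) :
    iteratedFDeriv ℝ 3 h x ![u, v, w] = iteratedFDeriv ℝ 3 h x ![v, u, w] := by
  have hg : ContDiff ℝ 3 (fderiv ℝ h) := hh.fderiv_right (by norm_num)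
  rw [iteratedFDeriv_succ_apply_right (n := 2) (m := ![u, v, w]),
    iteratedFDeriv_succ_apply_right (n := 2) (m := ![v, u, w])]
  have hi1 : Fin.init (![u, v, w] : Fin 3 → E) = ![u, v] := by funext i; fin_cases i <;> rfl
  have hi2 : Fin.init (![v, u, w] : Fin 3 → E) = ![v, u] := by funext i; fin_cases i <;> rfl
  rw [hi1, hi2]
  have hl1 : (![u, v, w] : Fin 3 → E) (Fin.last 2) = w := rfl
  have hl2 : (![v, u, w] : Fin 3 → E) (Fin.last 2) = w := rfl
  rw [hl1, hl2]
  have hs : iteratedFDeriv ℝ 2 (fun y => fderiv ℝ h y) x ![u, v]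
      = iteratedFDeriv ℝ 2 (fun y => fderiv ℝ h y) x ![v, u] := by
    rw [iteratedFDeriv_two_apply, iteratedFDeriv_two_apply]
    simp only [Matrix.cons_val_zero, Matrix.cons_val_one, Matrix.head_cons]
    exact hg.contDiffAt.isSymmSndFDerivAt (by norm_num) u v
  rw [hs]


/-! ### K2, K3 as forms evaluated on the rotated gradient -/

lemma wrot0 (h : E → ℝ) (x : E) : wrot h x 0 = pd1 h 1 x := rfl
lemma wrot1 (h : E → ℝ) (x : E) : wrot h x 1 = -pd1 h 0 x := rfl

lemma K2_form {h : E → ℝ} (hh : ContDiff ℝ 4 h) (x : E) :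
    K2 h x = (1 / 2) * iteratedFDeriv ℝ 2 h x ![wrot h x, wrot h x] := by
  rw [bexp, wrot0, wrot1]
  have h10 : iteratedFDeriv ℝ 2 h x ![ee 1, ee 0] = iteratedFDeriv ℝ 2 h x ![ee 0, ee 1] :=
    d2_symm hh x (ee 1) (ee 0)
  rw [h10]
  show K2 h x = 1 / 2 * (pd1 h 1 x * pd1 h 1 x * pd2 h 0 0 x
    + pd1 h 1 x * -pd1 h 0 x * pd2 h 0 1 x + -pd1 h 0 x * pd1 h 1 x * pd2 h 0 1 x
    + -pd1 h 0 x * -pd1 h 0 x * pd2 h 1 1 x)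
  unfold K2
  ring

lemma K3_form {h : E → ℝ} (hh : ContDiff ℝ 4 h) (x : E) :
    K3 h x = (1 / 6) * iteratedFDeriv ℝ 3 h x ![wrot h x, wrot h x, wrot h x] := by
  rw [texp, wrot0, wrot1]
  have e010 : iteratedFDeriv ℝ 3 h x ![ee 0, ee 1, ee 0] = iteratedFDeriv ℝ 3 h x ![ee 0, ee 0, ee 1] :=
    d3_symm23 hh x (ee 0) (ee 1) (ee 0)
  have e100 : iteratedFDeriv ℝ 3 h x ![ee 1, ee 0, ee 0] = iteratedFDeriv ℝ 3 h x ![ee 0, ee 0, ee 1] :=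
    (d3_symm12 hh x (ee 1) (ee 0) (ee 0)).trans e010
  have e101 : iteratedFDeriv ℝ 3 h x ![ee 1, ee 0, ee 1] = iteratedFDeriv ℝ 3 h x ![ee 0, ee 1, ee 1] :=
    d3_symm12 hh x (ee 1) (ee 0) (ee 1)
  have e110 : iteratedFDeriv ℝ 3 h x ![ee 1, ee 1, ee 0] = iteratedFDeriv ℝ 3 h x ![ee 0, ee 1, ee 1] :=
    (d3_symm23 hh x (ee 1) (ee 1) (ee 0)).trans e101
  rw [e010, e100, e101, e110]
  show K3 h x = 1 / 6 * (pd1 h 1 x * pd1 h 1 x * pd1 h 1 x * pd3 h 0 0 0 x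
    + pd1 h 1 x * pd1 h 1 x * -pd1 h 0 x * pd3 h 0 0 1 x
    + pd1 h 1 x * -pd1 h 0 x * pd1 h 1 x * pd3 h 0 0 1 x
    + pd1 h 1 x * -pd1 h 0 x * -pd1 h 0 x * pd3 h 0 1 1 x
    + -pd1 h 0 x * pd1 h 1 x * pd1 h 1 x * pd3 h 0 0 1 x
    + -pd1 h 0 x * pd1 h 1 x * -pd1 h 0 x * pd3 h 0 1 1 x
    + -pd1 h 0 x * -pd1 h 0 x * pd1 h 1 x * pd3 h 0 1 1 x
    + -pd1 h 0 x * -pd1 h 0 x * -pd1 h 0 x * pd3 h 1 1 1 x)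
  unfold K3
  ring


/-! ### composition with a linear map -/

noncomputable def dd (L : E →L[ℝ] E) : ℝ :=
  L (ee 0) 0 * L (ee 1) 1 - L (ee 1) 0 * L (ee 0) 1

variable {h : E → ℝ} (L : E →L[ℝ] E)

lemma pd1_comp (hh : ContDiff ℝ 4 h) (x : E) (i : Fin 2) :
    pd1 (fun y => h (L y)) i x = fderiv ℝ h (L x) (L (Pi.single i 1)) := by
  have hdh : DifferentiableAt ℝ h (L x) := (hh.differentiable (by norm_num)).differentiableAt
  have hc : fderiv ℝ (fun y => h (L y)) x = (fderiv ℝ h (L x)).comp L := by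
    rw [show (fun y => h (L y)) = h ∘ ⇑L from rfl, fderiv_comp x hdh L.differentiableAt, L.fderiv]
  unfold pd1
  rw [hc, ContinuousLinearMap.comp_apply]

lemma fd_apply (z v : E) : fderiv ℝ h z v = v 0 * pd1 h 0 z + v 1 * pd1 h 1 z := by
  conv_lhs => rw [vdec v]
  rw [map_add, _root_.map_smul, _root_.map_smul]
  unfold pd1 ee
  simp [smul_eq_mul]

lemma wrot_comp (hh : ContDiff ℝ 4 h) (x : E) :
    L (wrot (fun y => h (L y)) x) = dd L • wrot h (L x) := by
  have g0 : pd1 (fun y => h (L y)) 0 x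
      = L (ee 0) 0 * pd1 h 0 (L x) + L (ee 0) 1 * pd1 h 1 (L x) := by
    rw [pd1_comp L hh x 0]; exact fd_apply _ _
  have g1 : pd1 (fun y => h (L y)) 1 x
      = L (ee 1) 0 * pd1 h 0 (L x) + L (ee 1) 1 * pd1 h 1 (L x) := by
    rw [pd1_comp L hh x 1]; exact fd_apply _ _
  have hw : wrot (fun y => h (L y)) x
      = pd1 (fun y => h (L y)) 1 x • ee 0 + (-pd1 (fun y => h (L y)) 0 x) • ee 1 := by
    funext k; fin_cases k <;> simp [wrot, ee]
  rw [hw, map_add, _root_.map_smul, _root_.map_smul]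
  funext k
  fin_cases k <;>
    simp only [Pi.add_apply, Pi.smul_apply, smul_eq_mul, g0, g1, wrot, dd, Fin.mk_zero,
      Fin.mk_one, Fin.isValue, Matrix.cons_val_zero, Matrix.cons_val_one, Matrix.head_cons] <;>
    ring

lemma d2_comp (hh : ContDiff ℝ 4 h) (x u v : E) :
    iteratedFDeriv ℝ 2 (fun y => h (L y)) x ![u, v] = iteratedFDeriv ℝ 2 h (L x) ![L u, L v] := by
  have hco := L.iteratedFDeriv_comp_right hh x (i := 2) (by norm_num)
  rw [show (fun y => h (L y)) = h ∘ ⇑L from rfl, hco,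
    ContinuousMultilinearMap.compContinuousLinearMap_apply]
  congr 1; funext i; fin_cases i <;> rfl

lemma d3_comp (hh : ContDiff ℝ 4 h) (x u v w : E) :
    iteratedFDeriv ℝ 3 (fun y => h (L y)) x ![u, v, w]
      = iteratedFDeriv ℝ 3 h (L x) ![L u, L v, L w] := by
  have hco := L.iteratedFDeriv_comp_right hh x (i := 3) (by norm_num)
  rw [show (fun y => h (L y)) = h ∘ ⇑L from rfl, hco,
    ContinuousMultilinearMap.compContinuousLinearMap_apply]
  congr 1; funext i; fin_cases i <;> rfl

lemma K2_comp (hh : ContDiff ℝ 4 h) (x : E) :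
    K2 (fun y => h (L y)) x = (dd L) ^ 2 * K2 h (L x) := by
  have hg : ContDiff ℝ 4 (fun y => h (L y)) := hh.comp L.contDiff
  rw [K2_form hg, d2_comp L hh, wrot_comp L hh, bsmul, K2_form hh]; ring

lemma K3_comp (hh : ContDiff ℝ 4 h) (x : E) :
    K3 (fun y => h (L y)) x = (dd L) ^ 3 * K3 h (L x) := by
  have hg : ContDiff ℝ 4 (fun y => h (L y)) := hh.comp L.contDiff
  rw [K3_form hg, d3_comp L hh, wrot_comp L hh, tsmul, K3_form hh]; ring

lemma J3_comp (hh : ContDiff ℝ 4 h) (hd : dd L ≠ 0) :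
    J3 (fun y => h (L y)) = fun x => J3 h (L x) := by
  funext x
  show K3 (fun y => h (L y)) x ^ 2 / K2 (fun y => h (L y)) x ^ 3 = J3 h (L x)
  rw [K2_comp L hh, K3_comp L hh]
  show _ = K3 h (L x) ^ 2 / K2 h (L x) ^ 3
  rcases eq_or_ne (K2 h (L x)) 0 with h0 | h0
  · simp [h0]
  · field_simp

lemma lamhat_comp (hh : ContDiff ℝ 4 h) (x : E) (hd : dd L ≠ 0) :
    L (lamhat (fun y => h (L y)) x) = lamhat h (L x) := by
  unfold lamhat
  rw [_root_.map_smul, wrot_comp L hh, K2_comp L hh, K3_comp L hh, smul_smul]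
  congr 1
  rcases eq_or_ne (K2 h (L x)) 0 with h0 | h0
  · simp [h0]
  · field_simp

/-! ### differentiability -/

lemma diff_pd1 (hh : ContDiff ℝ 4 h) (i : Fin 2) : Differentiable ℝ (pd1 h i) := by
  have h1 : ContDiff ℝ 3 (fderiv ℝ h) := hh.fderiv_right (by norm_num)
  have he : pd1 h i
      = (ContinuousLinearMap.apply ℝ ℝ ((Pi.single i 1 : E))) ∘ (fderiv ℝ h) := rfl
  rw [he]
  exact (ContinuousLinearMap.apply ℝ ℝ ((Pi.single i 1 : E))).differentiable.comp
    (h1.differentiable (by norm_num))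

lemma diff_pd2 (hh : ContDiff ℝ 4 h) (i j : Fin 2) : Differentiable ℝ (pd2 h i j) := by
  have h1 : ContDiff ℝ 2 (iteratedFDeriv ℝ 2 h) := hh.iteratedFDeriv_right (by norm_num)
  have he : pd2 h i j = (ContinuousMultilinearMap.apply ℝ (fun _ : Fin 2 => E) ℝ
      ![Pi.single i 1, Pi.single j 1]) ∘ (iteratedFDeriv ℝ 2 h) := rfl
  rw [he]
  exact (ContinuousMultilinearMap.apply ℝ (fun _ : Fin 2 => E) ℝ
    ![Pi.single i 1, Pi.single j 1]).differentiable.comp (h1.differentiable (by norm_num))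

lemma diff_pd3 (hh : ContDiff ℝ 4 h) (i j m : Fin 2) : Differentiable ℝ (pd3 h i j m) := by
  have h1 : ContDiff ℝ 1 (iteratedFDeriv ℝ 3 h) := hh.iteratedFDeriv_right (by norm_num)
  have he : pd3 h i j m = (ContinuousMultilinearMap.apply ℝ (fun _ : Fin 3 => E) ℝ
      ![Pi.single i 1, Pi.single j 1, Pi.single m 1]) ∘ (iteratedFDeriv ℝ 3 h) := rfl
  rw [he]
  exact (ContinuousMultilinearMap.apply ℝ (fun _ : Fin 3 => E) ℝ
    ![Pi.single i 1, Pi.single j 1, Pi.single m 1]).differentiable.comp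
    (h1.differentiable (by norm_num))

lemma diff_K2 (hh : ContDiff ℝ 4 h) : Differentiable ℝ (K2 h) := by
  have he : K2 h = fun x => (1 / 2) * (pd2 h 0 0 x * pd1 h 1 x ^ 2
      - 2 * pd2 h 0 1 x * pd1 h 0 x * pd1 h 1 x + pd2 h 1 1 x * pd1 h 0 x ^ 2) := rfl
  rw [he]
  exact ((((diff_pd2 hh 0 0).mul ((diff_pd1 hh 1).pow 2)).sub
    ((((diff_pd2 hh 0 1).const_mul 2).mul (diff_pd1 hh 0)).mul (diff_pd1 hh 1))).add
    ((diff_pd2 hh 1 1).mul ((diff_pd1 hh 0).pow 2))).const_mul (1 / 2)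

lemma diff_K3 (hh : ContDiff ℝ 4 h) : Differentiable ℝ (K3 h) := by
  have he : K3 h = fun x => (1 / 6) * (pd3 h 0 0 0 x * pd1 h 1 x ^ 3
      - 3 * pd3 h 0 0 1 x * pd1 h 1 x ^ 2 * pd1 h 0 x
      + 3 * pd3 h 0 1 1 x * pd1 h 1 x * pd1 h 0 x ^ 2
      - pd3 h 1 1 1 x * pd1 h 0 x ^ 3) := rfl
  rw [he]
  exact (((((diff_pd3 hh 0 0 0).mul ((diff_pd1 hh 1).pow 3)).sub
    ((((diff_pd3 hh 0 0 1).const_mul 3).mul ((diff_pd1 hh 1).pow 2)).mul (diff_pd1 hh 0))).add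
    ((((diff_pd3 hh 0 1 1).const_mul 3).mul (diff_pd1 hh 1)).mul ((diff_pd1 hh 0).pow 2))).sub
    ((diff_pd3 hh 1 1 1).mul ((diff_pd1 hh 0).pow 3))).const_mul (1 / 6)

lemma diff_J3at (hh : ContDiff ℝ 4 h) (z : E) (hz : K2 h z ≠ 0) :
    DifferentiableAt ℝ (J3 h) z := by
  have he : J3 h = fun y => K3 h y ^ 2 * (K2 h y ^ 3)⁻¹ := by
    funext y; exact div_eq_mul_inv _ _
  rw [he]
  exact (((diff_K3 hh) z).pow 2).mul
    (DifferentiableAt.inv (((diff_K2 hh) z).pow 3) (pow_ne_zero 3 hz))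

lemma dd_eq_det (A : E →ₗ[ℝ] E) :
    dd (LinearMap.toContinuousLinearMap A) = LinearMap.det A := by
  rw [← LinearMap.det_toMatrix' A, Matrix.det_fin_two]
  have hsingle : ∀ j : Fin 2, (Pi.single j 1 : E) = fun j' => if j' = j then 1 else 0 := by
    intro j; funext j'; simp [Pi.single_apply]
  simp only [dd, LinearMap.coe_toContinuousLinearMap', ee, LinearMap.toMatrix'_apply, hsingle]

end J4Aux

/-- Applying the invariant derivation `λ̂` to the invariant `J₃` produces a new
`GL(2)`-invariant `J₄ = λ̂(J₃)` of order 4 of binary forms: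
`J₄(h∘A)(x) = J₄(h)(Ax)`. -/
theorem J4_invariance (h : (Fin 2 → ℝ) → ℝ) (hh : ContDiff ℝ 4 h)
    (A : (Fin 2 → ℝ) →ₗ[ℝ] (Fin 2 → ℝ)) (hA : LinearMap.det A ≠ 0)
    (x : Fin 2 → ℝ) (hx : ∀ᶠ y in nhds (A x), K2 h y ≠ 0) :
    J4 (fun y => h (A y)) x = J4 h (A x) := by
  set L : (Fin 2 → ℝ) →L[ℝ] (Fin 2 → ℝ) := LinearMap.toContinuousLinearMap A with hLdef
  have hd : J4Aux.dd L ≠ 0 := by rw [hLdef, J4Aux.dd_eq_det A]; exact hA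
  have hAL : A x = L x := rfl
  have hK2 : K2 h (L x) ≠ 0 := by rw [← hAL]; exact hx.self_of_nhds
  have hgfun : (fun y => h (A y)) = (fun y => h (L y)) := rfl
  rw [hgfun]
  show fderiv ℝ (J3 (fun y => h (L y))) x (lamhat (fun y => h (L y)) x) = J4 h (A x)
  rw [J4Aux.J3_comp L hh hd]
  have hdiff : DifferentiableAt ℝ (J3 h) (L x) := J4Aux.diff_J3at hh (L x) hK2
  have hc : fderiv ℝ (fun y => J3 h (L y)) x = (fderiv ℝ (J3 h) (L x)).comp L := by
    rw [show (fun y => J3 h (L y)) = (J3 h) ∘ ⇑L from rfl,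
      fderiv_comp x hdiff L.differentiableAt, L.fderiv]
  rw [hc, ContinuousLinearMap.comp_apply, J4Aux.lamhat_comp L hh x hd]
  rfl
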